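/- For any integer k ≥ 1 and any finite multiset A of non-negative reals, Ψ_{k−1}(A)^k ≤ Ψ_k(A)^{k−1}. -/

import Mathlib

/-- `hpoly k A` is the complete homogeneous sum of degree `k` in the elements
of the list `A` (sum of all monomials of total degree `k`). -/
noncomputable def hpoly : ℕ → List ℝ → ℝ
  | 0, _ => 1
  | _+1, [] => 0
  | k+1, a :: A => a * hpoly k (a :: A) + hpoly (k+1) A
termination_by k A => (k, A.length)

/-- `Psi k A = k! ·` (sum of all monomials of total degree `k` in the elements of `A`). -/
noncomputable def Psi (k : ℕ) (A : List ℝ) : ℝ := (Nat.factorial k : ℝ) * hpoly k A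

open Polynomial MeasureTheory Real Set

lemma Psi_zero (A : List ℝ) : Psi 0 A = 1 := by simp [Psi, hpoly]

lemma Psi_nil (n : ℕ) : Psi n [] = (0:ℝ)^n := by
  cases n with
  | zero => simp [Psi, hpoly]
  | succ m => simp [Psi, hpoly]

lemma Psi_cons (a : ℝ) (A : List ℝ) (n : ℕ) :
    Psi (n+1) (a::A) = a*(n+1)*Psi n (a::A) + Psi (n+1) A := by
  have h : hpoly (n+1) (a::A) = a * hpoly n (a :: A) + hpoly (n+1) A := by rw [hpoly]
  rw [Psi, h, Psi, Psi, Nat.factorial_succ]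
  push_cast
  ring

lemma hpoly_nonneg : ∀ (A : List ℝ), (∀ x ∈ A, 0 ≤ x) → ∀ k, 0 ≤ hpoly k A := by
  intro A
  induction A with
  | nil => intro _ k; cases k <;> simp [hpoly]
  | cons a A ih =>
    intro h k
    have ha : 0 ≤ a := h a (by simp)
    have hA : ∀ x ∈ A, 0 ≤ x := fun x hx => h x (by simp [hx])
    induction k using Nat.strong_induction_on with
    | _ k ihk =>
      cases k with
      | zero => norm_num [hpoly]
      | succ m =>
        have hh : hpoly (m+1) (a::A) = a * hpoly m (a :: A) + hpoly (m+1) A := by rw [hpoly]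
        rw [hh]
        have h1 := ihk m (Nat.lt_succ_self m)
        have h2 := ih hA (m+1)
        positivity

lemma Psi_nonneg (A : List ℝ) (hA : ∀ x ∈ A, 0 ≤ x) (k : ℕ) : 0 ≤ Psi k A := by
  have h1 := hpoly_nonneg A hA k
  have h2 : (0:ℝ) ≤ (Nat.factorial k : ℝ) := by positivity
  exact mul_nonneg h2 h1

lemma Psi_cons_eq (a : ℝ) (A : List ℝ) : ∀ n : ℕ,
    Psi n (a::A) = ∑ m ∈ Finset.range (n+1),
      (n.choose m : ℝ) * (m.factorial : ℝ) * a^m * Psi (n-m) A := by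
  intro n
  induction n with
  | zero => simp [Psi_zero]
  | succ n ih =>
    rw [Psi_cons, ih, Finset.sum_range_succ' _ (n+1)]
    have h0 : ((n+1).choose 0 : ℝ) * (Nat.factorial 0 : ℝ) * a^0 * Psi (n+1-0) A
        = Psi (n+1) A := by norm_num
    rw [h0, Finset.mul_sum]
    congr 1
    apply Finset.sum_congr rfl
    intro i hi
    have hnat : (n+1) * (n.choose i * i.factorial) = (n+1).choose (i+1) * (i+1).factorial := by
      rw [Nat.factorial_succ, ← mul_assoc ((n+1).choose (i+1)), ← Nat.add_one_mul_choose_eq]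
      ring
    have : ((n+1:ℕ) : ℝ) * ((n.choose i : ℝ) * (i.factorial : ℝ))
        = ((n+1).choose (i+1) : ℝ) * ((i+1).factorial : ℝ) := by exact_mod_cast congrArg Nat.cast hnat
    have hsub : n + 1 - (i + 1) = n - i := by omega
    rw [hsub]
    push_cast at this ⊢
    linear_combination (a ^ i * a * Psi (n - i) A) * this

/-- The moment functional. -/
noncomputable def Lf (A : List ℝ) : Polynomial ℝ →ₗ[ℝ] ℝ :=
  Polynomial.lsum (fun n => LinearMap.toSpanSingleton ℝ ℝ (Psi n A))

lemma Lf_monomial (A : List ℝ) (n : ℕ) (c : ℝ) : Lf A (monomial n c) = c * Psi n A := by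
  rw [Lf, lsum_apply, sum_monomial_index]
  · rfl
  · simp

lemma Lf_nil (q : Polynomial ℝ) : Lf [] q = q.eval 0 := by
  rw [Lf, lsum_apply, Polynomial.sum, eval_eq_sum, Polynomial.sum]
  apply Finset.sum_congr rfl
  intro n _
  rw [Psi_nil]
  rfl

lemma Lf_C_mul (A : List ℝ) (u : ℝ) (p : Polynomial ℝ) : Lf A (C u * p) = u * Lf A p := by
  rw [← smul_eq_C_mul, _root_.map_smul, smul_eq_mul]

lemma Lf_add_pow (A : List ℝ) (u : ℝ) (n : ℕ) :
    Lf A ((X + C u)^n)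
      = ∑ m ∈ Finset.range (n+1), (n.choose m : ℝ) * u^(n-m) * Psi m A := by
  rw [add_pow, map_sum]
  apply Finset.sum_congr rfl
  intro m _
  have : (X:ℝ[X])^m * (C u)^(n-m) * ((n.choose m : ℕ) : ℝ[X])
      = monomial m (u^(n-m) * (n.choose m : ℝ)) := by
    rw [← C_pow, ← C_eq_natCast, mul_assoc, ← C_mul, ← C_mul_X_pow_eq_monomial]
    ring
  rw [this, Lf_monomial]
  ring

lemma integrableOn_pow_exp (m : ℕ) :
    IntegrableOn (fun x : ℝ => x^m * Real.exp (-x)) (Ioi 0) := by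
  have h := Real.GammaIntegral_convergent (s := (m+1:ℝ)) (by positivity)
  apply h.congr_fun ?_ measurableSet_Ioi
  intro x _
  show rexp (-x) * x ^ ((m:ℝ)+1-1) = x ^ m * rexp (-x)
  rw [show ((m:ℝ)+1-1) = (m:ℝ) by ring, Real.rpow_natCast]
  ring

lemma integral_pow_exp (m : ℕ) :
    ∫ x in Ioi 0, x^m * Real.exp (-x) = (m.factorial : ℝ) := by
  rw [← Real.Gamma_nat_eq_factorial, Real.Gamma_eq_integral (by positivity : (0:ℝ) < m+1)]
  apply setIntegral_congr_fun measurableSet_Ioi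
  intro x _
  show x ^ m * rexp (-x) = rexp (-x) * x ^ ((m:ℝ)+1-1)
  rw [show ((m:ℝ)+1-1) = (m:ℝ) by ring, Real.rpow_natCast]
  ring

lemma key (a : ℝ) (A : List ℝ) (p : ℝ[X]) :
    IntegrableOn (fun x => Lf A (p.comp (X + C (a*x))) * Real.exp (-x)) (Ioi 0) ∧
    ∫ x in Ioi 0, Lf A (p.comp (X + C (a*x))) * Real.exp (-x) = Lf (a::A) p := by
  induction p using Polynomial.induction_on' with
  | add p q hp hq =>
    constructor
    · simp only [add_comp, map_add, add_mul]
      exact hp.1.add hq.1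
    · simp only [add_comp, map_add, add_mul]
      rw [integral_add hp.1 hq.1, hp.2, hq.2]
  | monomial n c =>
    have hfx : ∀ x : ℝ, Lf A ((monomial n c).comp (X + C (a*x))) * rexp (-x)
        = ∑ m ∈ Finset.range (n+1),
            (c * (n.choose m:ℝ) * a^(n-m) * Psi m A) * (x^(n-m) * rexp (-x)) := by
      intro x
      rw [monomial_comp, Lf_C_mul, Lf_add_pow, Finset.mul_sum, Finset.sum_mul]
      apply Finset.sum_congr rfl
      intro m _
      rw [mul_pow]
      ring
    have hint : ∀ m ∈ Finset.range (n+1),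
        IntegrableOn (fun x : ℝ => (c * (n.choose m:ℝ) * a^(n-m) * Psi m A)
          * (x^(n-m) * rexp (-x))) (Ioi 0) :=
      fun m _ => (integrableOn_pow_exp (n-m)).const_mul _
    constructor
    · simp only [hfx]
      exact integrable_finset_sum _ hint
    · simp only [hfx]
      rw [integral_finset_sum _ hint]
      simp only [MeasureTheory.integral_const_mul, integral_pow_exp]
      rw [Lf_monomial, Psi_cons_eq, ← Finset.sum_range_reflect
        (fun m => (n.choose m : ℝ) * (m.factorial : ℝ) * a^m * Psi (n-m) A) (n+1),
        Finset.mul_sum]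
      apply Finset.sum_congr rfl
      intro m hm
      have hmn : m ≤ n := by simpa [Nat.lt_succ_iff] using hm
      rw [show n + 1 - 1 - m = n - m by omega, Nat.choose_symm hmn, Nat.sub_sub_self hmn]
      ring

lemma pos_forms : ∀ (A : List ℝ), (∀ x ∈ A, 0 ≤ x) →
    ∀ p : ℝ[X], 0 ≤ Lf A (p*p) ∧ 0 ≤ Lf A (X*(p*p)) := by
  intro A
  induction A with
  | nil =>
    intro _ p
    rw [Lf_nil, Lf_nil]
    constructor
    · rw [eval_mul]; exact mul_self_nonneg _
    · simp
  | cons a A ih =>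
    intro h p
    have ha : 0 ≤ a := h a (by simp)
    have hA : ∀ x ∈ A, 0 ≤ x := fun x hx => h x (by simp [hx])
    constructor
    · rw [← (key a A (p*p)).2]
      apply setIntegral_nonneg measurableSet_Ioi
      intro x _
      apply mul_nonneg _ (Real.exp_pos _).le
      rw [mul_comp]
      exact (ih hA _).1
    · rw [← (key a A (X*(p*p))).2]
      apply setIntegral_nonneg measurableSet_Ioi
      intro x hx
      apply mul_nonneg _ (Real.exp_pos _).le
      rw [mul_comp, X_comp, mul_comp, add_mul, map_add, Lf_C_mul]
      have h1 := (ih hA (p.comp (X + C (a*x)))).2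
      have h2 := (ih hA (p.comp (X + C (a*x)))).1
      have hax : 0 ≤ a * x := mul_nonneg ha (le_of_lt hx)
      nlinarith [h1, h2, hax]

lemma psi_logconvex (A : List ℝ) (hA : ∀ x ∈ A, 0 ≤ x) (m : ℕ) :
    Psi (m+1) A ^ 2 ≤ Psi m A * Psi (m+2) A := by
  have hq : ∀ t : ℝ, 0 ≤ Psi m A * (t*t) + (2*Psi (m+1) A) * t + Psi (m+2) A := by
    intro t
    rcases Nat.even_or_odd m with ⟨s, hs⟩ | ⟨s, hs⟩
    · have h := (pos_forms A hA (monomial s t + monomial (s+1) 1)).1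
      simp only [mul_add, add_mul, monomial_mul_monomial, one_mul, mul_one, map_add,
        Lf_monomial] at h
      rw [show s + (s+1) = (s+s)+1 by omega, show (s+1) + s = (s+s)+1 by omega,
        show (s+1) + (s+1) = (s+s)+2 by omega] at h
      rw [hs]
      linarith
    · have h := (pos_forms A hA (monomial s t + monomial (s+1) 1)).2
      simp only [mul_add, add_mul, ← monomial_one_one_eq_X, monomial_mul_monomial,
        one_mul, mul_one, map_add, Lf_monomial] at h
      rw [show 1 + (s + s) = (2*s+1) by omega, show 1 + (s + (s+1)) = (2*s+1)+1 by omega, show 1 + (s + 1 + s) = (2*s+1)+1 by omega,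
        show 1 + ((s+1) + (s+1)) = (2*s+1)+2 by omega] at h
      rw [hs]
      linarith
  have hd := discrim_le_zero hq
  rw [discrim] at hd
  nlinarith [hd]

lemma psi_chain (A : List ℝ) (hA : ∀ x ∈ A, 0 ≤ x) : ∀ m : ℕ,
    Psi m A ^ (m+1) ≤ Psi (m+1) A ^ m := by
  intro m
  induction m with
  | zero => simp [Psi_zero]
  | succ m ih =>
    have lc := psi_logconvex A hA m
    have h1 : Psi (m+1) A ^ (2*(m+1)) ≤ Psi (m+1) A ^ m * Psi (m+2) A ^ (m+1) := by
      have h2 : (Psi (m+1) A ^ 2) ^ (m+1) ≤ (Psi m A * Psi (m+2) A) ^ (m+1) :=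
        pow_le_pow_left₀ (sq_nonneg _) lc (m+1)
      rw [← pow_mul, mul_pow] at h2
      exact h2.trans (mul_le_mul_of_nonneg_right ih (pow_nonneg (Psi_nonneg A hA _) _))
    rcases eq_or_lt_of_le (Psi_nonneg A hA (m+1)) with h0 | h0
    · rw [← h0, zero_pow (by omega : m + 1 + 1 ≠ 0)]
      exact pow_nonneg (Psi_nonneg A hA _) _
    · have hp : 0 < Psi (m+1) A ^ m := pow_pos h0 m
      have e : Psi (m+1) A ^ (2*(m+1)) = Psi (m+1) A ^ m * Psi (m+1) A ^ (m+2) := by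
        rw [← pow_add]; congr 1; omega
      rw [e] at h1
      exact le_of_mul_le_mul_left h1 hp

theorem stmt2 (k : ℕ) (hk : 1 ≤ k) (A : List ℝ) (hA : ∀ x ∈ A, 0 ≤ x) :
    Psi (k - 1) A ^ k ≤ Psi k A ^ (k - 1) := by
  obtain ⟨m, rfl⟩ : ∃ m, k = m + 1 := ⟨k - 1, by omega⟩
  simpa using psi_chain A hA m
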